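/- The unique global minimizer c* of F satisfies -0.434749 < c* < -0.434747. -/

import Mathlib

open MeasureTheory Real Set

/-- The closed pentagon with vertices (-1,-1), (1,-1), (1,0), (0,1), (-1,1). -/
def P : Set (ℝ × ℝ) :=
  {p : ℝ × ℝ | -1 ≤ p.1 ∧ p.1 ≤ 1 ∧ -1 ≤ p.2 ∧ p.2 ≤ 1 ∧ p.1 + p.2 ≤ 1}

/-- `F c = ∫_P e^{-c(x₁+x₂)} dx₁ dx₂` (Lebesgue measure on ℝ²). -/
noncomputable def F (c : ℝ) : ℝ := ∫ p in P, Real.exp (-c * (p.1 + p.2))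

lemma isClosed_P : IsClosed P := by
  have : P = {p : ℝ × ℝ | -1 ≤ p.1} ∩ ({p | p.1 ≤ 1} ∩ ({p | -1 ≤ p.2} ∩
      ({p | p.2 ≤ 1} ∩ {p | p.1 + p.2 ≤ 1}))) := by
    ext p; simp [P, Set.mem_setOf_eq, and_assoc]
  rw [this]
  exact (isClosed_le continuous_const continuous_fst).inter
    ((isClosed_le continuous_fst continuous_const).inter
    ((isClosed_le continuous_const continuous_snd).inter
    ((isClosed_le continuous_snd continuous_const).inter
    (isClosed_le (continuous_fst.add continuous_snd) continuous_const))))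

lemma measurableSet_P : MeasurableSet P := isClosed_P.measurableSet

lemma isCompact_P : IsCompact P := by
  refine (isCompact_Icc (a := ((-1 : ℝ), (-1 : ℝ))) (b := (1, 1))).of_isClosed_subset isClosed_P ?_
  rintro ⟨x, y⟩ ⟨h1, h2, h3, h4, h5⟩
  exact ⟨⟨h1, h3⟩, ⟨h2, h4⟩⟩

lemma integrableOn_P (c : ℝ) :
    IntegrableOn (fun p : ℝ × ℝ => Real.exp (-c * (p.1 + p.2))) P volume := by
  apply ContinuousOn.integrableOn_compact isCompact_P
  exact (Continuous.continuousOn (by continuity))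

lemma F_convex {x y t s : ℝ} (ht : 0 ≤ t) (hs : 0 ≤ s) (hts : t + s = 1) :
    F (t * x + s * y) ≤ t * F x + s * F y := by
  have key : ∀ p ∈ P, Real.exp (-(t * x + s * y) * (p.1 + p.2)) ≤
      t * Real.exp (-x * (p.1 + p.2)) + s * Real.exp (-y * (p.1 + p.2)) := by
    intro p _
    have := convexOn_exp.2 (Set.mem_univ (-x * (p.1 + p.2))) (Set.mem_univ (-y * (p.1 + p.2)))
      ht hs hts
    have e : -(t * x + s * y) * (p.1 + p.2) = t • (-x * (p.1 + p.2)) + s • (-y * (p.1 + p.2)) := by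
      simp [smul_eq_mul]; ring
    rw [e]; simpa [smul_eq_mul] using this
  have hInt1 := integrableOn_P (t * x + s * y)
  have hInt2 : IntegrableOn (fun p : ℝ × ℝ => t * Real.exp (-x * (p.1 + p.2)) +
      s * Real.exp (-y * (p.1 + p.2))) P volume :=
    ((integrableOn_P x).const_mul t).add ((integrableOn_P y).const_mul s)
  calc F (t * x + s * y) ≤ ∫ p in P, (t * Real.exp (-x * (p.1 + p.2)) +
        s * Real.exp (-y * (p.1 + p.2))) :=
      setIntegral_mono_on hInt1 hInt2 measurableSet_P key
    _ = t * F x + s * F y := by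
      rw [integral_add (((integrableOn_P x).const_mul t)) (((integrableOn_P y).const_mul s)),
        MeasureTheory.integral_const_mul, MeasureTheory.integral_const_mul]
      rfl

lemma intExp (c : ℝ) (hc : c ≠ 0) (a b : ℝ) :
    ∫ y in a..b, Real.exp (-c * y) = (Real.exp (-c * a) - Real.exp (-c * b)) / c := by
  have hd : ∀ y : ℝ, HasDerivAt (fun y => -(Real.exp (-c * y) / c)) (Real.exp (-c * y)) y := by
    intro y
    have h1 : HasDerivAt (fun y : ℝ => -c * y) (-c) y := by
      simpa using (hasDerivAt_id y).const_mul (-c)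
    have h3 := (h1.exp.div_const c).neg
    convert h3 using 1
    all_goals first | rfl | field_simp
  rw [intervalIntegral.integral_eq_sub_of_hasDerivAt (fun y _ => hd y)
    ((Real.continuous_exp.comp (continuous_const.mul continuous_id)).intervalIntegrable a b)]
  ring

lemma setExp (c : ℝ) (hc : c ≠ 0) {a b : ℝ} (hab : a ≤ b) :
    ∫ y in Icc a b, Real.exp (-c * y) = (Real.exp (-c * a) - Real.exp (-c * b)) / c := by
  rw [integral_Icc_eq_integral_Ioc, ← intervalIntegral.integral_of_le hab, intExp c hc]

lemma Fval (c : ℝ) (hc : c ≠ 0) :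
    F c = (Real.exp (2 * c) - 2 + (1 - c) * Real.exp (-c)) / c ^ 2 := by
  set f : ℝ × ℝ → ℝ := fun p => Real.exp (-c * (p.1 + p.2)) with hf
  set g : ℝ → ℝ := fun x =>
    Real.exp (-c * x) * ((Real.exp c - Real.exp (-c * min 1 (1 - x))) / c) with hg
  have hint : Integrable (P.indicator f) ((volume : Measure ℝ).prod volume) := by
    rw [← Measure.volume_eq_prod]
    exact (integrableOn_P c).integrable_indicator measurableSet_P
  have h1 : F c = ∫ x : ℝ, ∫ y : ℝ, P.indicator f (x, y) := by
    rw [F, ← integral_indicator measurableSet_P, Measure.volume_eq_prod,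
      integral_prod _ hint]
  have h3 : ∀ x : ℝ, (∫ y : ℝ, P.indicator f (x, y)) = (Icc (-1 : ℝ) 1).indicator g x := by
    intro x
    by_cases hx : x ∈ Icc (-1 : ℝ) 1
    · obtain ⟨hx1, hx2⟩ := hx
      have hmem : ∀ y : ℝ, (x, y) ∈ P ↔ y ∈ Icc (-1 : ℝ) (min 1 (1 - x)) := by
        intro y
        simp only [P, Set.mem_setOf_eq, Set.mem_Icc, le_min_iff]
        constructor
        · rintro ⟨_, _, h3, h4, h5⟩; exact ⟨h3, h4, by linarith⟩
        · rintro ⟨h3, h4, h5⟩; exact ⟨hx1, hx2, h3, h4, by linarith⟩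
      have heq : (fun y => P.indicator f (x, y)) =
          (Icc (-1 : ℝ) (min 1 (1 - x))).indicator (fun y => f (x, y)) := by
        funext y
        by_cases hy : y ∈ Icc (-1 : ℝ) (min 1 (1 - x))
        · rw [Set.indicator_of_mem hy, Set.indicator_of_mem ((hmem y).2 hy)]
        · rw [Set.indicator_of_notMem hy,
            Set.indicator_of_notMem (fun h => hy ((hmem y).1 h))]
      rw [heq, integral_indicator measurableSet_Icc,
        Set.indicator_of_mem (Set.mem_Icc.mpr ⟨hx1, hx2⟩)]
      have hfac : ∀ y : ℝ, f (x, y) = Real.exp (-c * x) * Real.exp (-c * y) := by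
        intro y; rw [hf, ← Real.exp_add]; ring_nf
      simp_rw [hfac]
      rw [MeasureTheory.integral_const_mul,
        setExp c hc (le_min (by linarith) (by linarith))]
      rw [hg]
      norm_num
    · have heq : (fun y => P.indicator f (x, y)) = fun _ => (0 : ℝ) := by
        funext y
        apply Set.indicator_of_notMem
        intro h
        exact hx ⟨h.1, h.2.1⟩
      rw [heq, Set.indicator_of_notMem hx, integral_zero]
  have h4 : F c = ∫ x in Icc (-1 : ℝ) 1, g x := by
    rw [h1]
    simp_rw [h3]
    rw [integral_indicator measurableSet_Icc]
  have hgc : Continuous g := by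
    rw [hg]
    have : Continuous fun x : ℝ => min 1 (1 - x) :=
      continuous_const.min (continuous_const.sub continuous_id)
    exact (Real.continuous_exp.comp (continuous_const.mul continuous_id)).mul
      ((continuous_const.sub (Real.continuous_exp.comp (continuous_const.mul this))).div_const c)
  have hc1 : Real.exp c * Real.exp (-c) = 1 := by rw [← Real.exp_add]; norm_num
  have hL : ∫ x in (-1 : ℝ)..0, g x =
      ((Real.exp c - Real.exp (-c)) / c) * ((Real.exp c - 1) / c) := by
    have heq : EqOn g (fun x => ((Real.exp c - Real.exp (-c)) / c) * Real.exp (-c * x))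
        (Set.uIcc (-1 : ℝ) 0) := by
      intro x hx
      rw [Set.uIcc_of_le (by norm_num)] at hx
      have hm : min 1 (1 - x) = 1 := min_eq_left (by linarith [hx.2])
      simp only [hg, hm]
      ring
    rw [intervalIntegral.integral_congr heq, intervalIntegral.integral_const_mul, intExp c hc]
    norm_num
  have hR : ∫ x in (0 : ℝ)..1, g x =
      (Real.exp c / c) * ((1 - Real.exp (-c)) / c) - Real.exp (-c) / c := by
    have heq : EqOn g (fun x => (Real.exp c / c) * Real.exp (-c * x) - Real.exp (-c) / c)
        (Set.uIcc (0 : ℝ) 1) := by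
      intro x hx
      rw [Set.uIcc_of_le (by norm_num)] at hx
      have hm : min 1 (1 - x) = 1 - x := min_eq_right (by linarith [hx.1])
      have hmul : Real.exp (-c * x) * Real.exp (-c * (1 - x)) = Real.exp (-c) := by
        rw [← Real.exp_add]; ring_nf
      simp only [hg, hm]
      linear_combination (-1 / c : ℝ) * hmul
    have hce : Continuous fun x : ℝ => Real.exp (-c * x) := by fun_prop
    rw [intervalIntegral.integral_congr heq, intervalIntegral.integral_sub
      ((hce.intervalIntegrable 0 1).const_mul _) intervalIntegrable_const,
      intervalIntegral.integral_const_mul, intExp c hc, intervalIntegral.integral_const]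
    norm_num
  rw [h4, integral_Icc_eq_integral_Ioc,
    ← intervalIntegral.integral_of_le (by norm_num : (-1 : ℝ) ≤ 1),
    ← intervalIntegral.integral_add_adjacent_intervals
      (hgc.intervalIntegrable (-1) 0) (hgc.intervalIntegrable 0 1),
    hL, hR, show (2 : ℝ) * c = c + c by ring, Real.exp_add]
  field_simp
  linear_combination (-2 : ℝ) * hc1

lemma expb_m2 : (209581377023799299/500000000000000000 : ℝ) ≤ Real.exp ((-(108687/125000) : ℝ)) ∧
    Real.exp ((-(108687/125000) : ℝ)) ≤ (419162754047598601/1000000000000000000 : ℝ) := by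
  have habs : |((-(108687/125000)) : ℝ)| = |(-(108687/125000) : ℝ)| := rfl
  have habs2 : |((-(108687/125000)) : ℝ)| = 108687/125000 := by
    rw [abs_neg]; exact abs_of_nonneg (by norm_num)
  have h := Real.exp_bound (x := ((-(108687/125000)) : ℝ)) (by rw [habs2]; norm_num) (n := 25) (by norm_num)
  rw [abs_le, habs2] at h
  obtain ⟨ha, hb⟩ := h
  norm_num [Finset.sum_range_succ, Nat.factorial] at ha hb
  constructor <;> linarith

lemma expb_m1 : (386143444328007319/250000000000000000 : ℝ) ≤ Real.exp ((108687/250000 : ℝ)) ∧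
    Real.exp ((108687/250000 : ℝ)) ≤ (1544573777312029279/1000000000000000000 : ℝ) := by
  have habs : |((108687/250000) : ℝ)| = |(108687/250000 : ℝ)| := rfl
  have habs2 : |((108687/250000) : ℝ)| = 108687/250000 := by
    exact abs_of_nonneg (by norm_num)
  have h := Real.exp_bound (x := ((108687/250000) : ℝ)) (by rw [habs2]; norm_num) (n := 25) (by norm_num)
  rw [abs_le, habs2] at h
  obtain ⟨ha, hb⟩ := h
  norm_num [Finset.sum_range_succ, Nat.factorial] at ha hb
  constructor <;> linarith

lemma expb_a2 : (419161915722928827/1000000000000000000 : ℝ) ≤ Real.exp ((-(434749/500000) : ℝ)) ∧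
    Real.exp ((-(434749/500000) : ℝ)) ≤ (41916191572292883/100000000000000000 : ℝ) := by
  have habs : |((-(434749/500000)) : ℝ)| = |(-(434749/500000) : ℝ)| := rfl
  have habs2 : |((-(434749/500000)) : ℝ)| = 434749/500000 := by
    rw [abs_neg]; exact abs_of_nonneg (by norm_num)
  have h := Real.exp_bound (x := ((-(434749/500000)) : ℝ)) (by rw [habs2]; norm_num) (n := 25) (by norm_num)
  rw [abs_le, habs2] at h
  obtain ⟨ha, hb⟩ := h
  norm_num [Finset.sum_range_succ, Nat.factorial] at ha hb
  constructor <;> linarith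

lemma expb_a1 : (12356602575092631/8000000000000000 : ℝ) ≤ Real.exp ((434749/1000000 : ℝ)) ∧
    Real.exp ((434749/1000000 : ℝ)) ≤ (772287660943289439/500000000000000000 : ℝ) := by
  have habs : |((434749/1000000) : ℝ)| = |(434749/1000000 : ℝ)| := rfl
  have habs2 : |((434749/1000000) : ℝ)| = 434749/1000000 := by
    exact abs_of_nonneg (by norm_num)
  have h := Real.exp_bound (x := ((434749/1000000) : ℝ)) (by rw [habs2]; norm_num) (n := 25) (by norm_num)
  rw [abs_le, habs2] at h
  obtain ⟨ha, hb⟩ := h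
  norm_num [Finset.sum_range_succ, Nat.factorial] at ha hb
  constructor <;> linarith

lemma expb_b2 : (419163592373945019/1000000000000000000 : ℝ) ≤ Real.exp ((-(434747/500000) : ℝ)) ∧
    Real.exp ((-(434747/500000) : ℝ)) ≤ (209581796186972511/500000000000000000 : ℝ) := by
  have habs : |((-(434747/500000)) : ℝ)| = |(-(434747/500000) : ℝ)| := rfl
  have habs2 : |((-(434747/500000)) : ℝ)| = 434747/500000 := by
    rw [abs_neg]; exact abs_of_nonneg (by norm_num)
  have h := Real.exp_bound (x := ((-(434747/500000)) : ℝ)) (by rw [habs2]; norm_num) (n := 25) (by norm_num)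
  rw [abs_le, habs2] at h
  obtain ⟨ha, hb⟩ := h
  norm_num [Finset.sum_range_succ, Nat.factorial] at ha hb
  constructor <;> linarith

lemma expb_b1 : (1544572232739024251/1000000000000000000 : ℝ) ≤ Real.exp ((434747/1000000 : ℝ)) ∧
    Real.exp ((434747/1000000 : ℝ)) ≤ (772286116369512127/500000000000000000 : ℝ) := by
  have habs : |((434747/1000000) : ℝ)| = |(434747/1000000 : ℝ)| := rfl
  have habs2 : |((434747/1000000) : ℝ)| = 434747/1000000 := by
    exact abs_of_nonneg (by norm_num)
  have h := Real.exp_bound (x := ((434747/1000000) : ℝ)) (by rw [habs2]; norm_num) (n := 25) (by norm_num)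
  rw [abs_le, habs2] at h
  obtain ⟨ha, hb⟩ := h
  norm_num [Finset.sum_range_succ, Nat.factorial] at ha hb
  constructor <;> linarith

lemma comp_ma :
    (Real.exp (2 * (-0.434748 : ℝ)) - 2 + (1 - (-0.434748 : ℝ)) * Real.exp (-(-0.434748 : ℝ)))
      / (-0.434748 : ℝ) ^ 2 <
    (Real.exp (2 * (-0.434749 : ℝ)) - 2 + (1 - (-0.434749 : ℝ)) * Real.exp (-(-0.434749 : ℝ)))
      / (-0.434749 : ℝ) ^ 2 := by
  rw [show (2 * (-0.434748 : ℝ)) = (-(108687/125000) : ℝ) by norm_num,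
    show (-(-0.434748 : ℝ)) = (108687/250000 : ℝ) by norm_num,
    show (2 * (-0.434749 : ℝ)) = (-(434749/500000) : ℝ) by norm_num,
    show (-(-0.434749 : ℝ)) = (434749/1000000 : ℝ) by norm_num,
    div_lt_div_iff₀ (by norm_num) (by norm_num)]
  have h1 := expb_m2.2
  have h2 := expb_m1.2
  have h3 := expb_a2.1
  have h4 := expb_a1.1
  nlinarith [h1, h2, h3, h4]

lemma comp_mb :
    (Real.exp (2 * (-0.434748 : ℝ)) - 2 + (1 - (-0.434748 : ℝ)) * Real.exp (-(-0.434748 : ℝ)))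
      / (-0.434748 : ℝ) ^ 2 <
    (Real.exp (2 * (-0.434747 : ℝ)) - 2 + (1 - (-0.434747 : ℝ)) * Real.exp (-(-0.434747 : ℝ)))
      / (-0.434747 : ℝ) ^ 2 := by
  rw [show (2 * (-0.434748 : ℝ)) = (-(108687/125000) : ℝ) by norm_num,
    show (-(-0.434748 : ℝ)) = (108687/250000 : ℝ) by norm_num,
    show (2 * (-0.434747 : ℝ)) = (-(434747/500000) : ℝ) by norm_num,
    show (-(-0.434747 : ℝ)) = (434747/1000000 : ℝ) by norm_num,
    div_lt_div_iff₀ (by norm_num) (by norm_num)]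
  have h1 := expb_m2.2
  have h2 := expb_m1.2
  have h3 := expb_b2.1
  have h4 := expb_b1.1
  nlinarith [h1, h2, h3, h4]

/-- The unique global minimizer `cs` of `F` satisfies `-0.434749 < cs < -0.434747`. -/
theorem stmt_4 (cs : ℝ) (hmin : ∀ c : ℝ, F cs ≤ F c) :
    -0.434749 < cs ∧ cs < -0.434747 := by
  have hFma : F (-0.434748 : ℝ) < F (-0.434749 : ℝ) := by
    rw [Fval _ (by norm_num), Fval _ (by norm_num)]; exact comp_ma
  have hFmb : F (-0.434748 : ℝ) < F (-0.434747 : ℝ) := by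
    rw [Fval _ (by norm_num), Fval _ (by norm_num)]; exact comp_mb
  constructor
  · by_contra hle
    push_neg at hle
    rcases eq_or_lt_of_le hle with heq | hlt
    · have := hmin (-0.434748 : ℝ)
      rw [← heq] at hFma
      linarith
    · -- cs < -0.434749 < -0.434748
      set a : ℝ := -0.434749 with ha
      set m : ℝ := -0.434748 with hm
      have hden : (0 : ℝ) < m - cs := by
        have : a < m := by rw [ha, hm]; norm_num
        linarith
      have ht : 0 ≤ (m - a) / (m - cs) := div_nonneg (by rw [ha, hm]; norm_num) hden.le
      have hs : 0 < (a - cs) / (m - cs) := div_pos (by linarith) hden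
      have hts : (m - a) / (m - cs) + (a - cs) / (m - cs) = 1 := by
        field_simp; ring
      have hcomb : (m - a) / (m - cs) * cs + (a - cs) / (m - cs) * m = a := by
        field_simp; ring
      have hconv := F_convex (x := cs) (y := m) ht hs.le hts
      rw [hcomb] at hconv
      have h1 := hmin a
      have e1 : (m - a) / (m - cs) * F cs ≤ (m - a) / (m - cs) * F a :=
        mul_le_mul_of_nonneg_left h1 ht
      have e2 : (a - cs) / (m - cs) * F m < (a - cs) / (m - cs) * F a :=
        (mul_lt_mul_iff_of_pos_left hs).2 hFma
      have e3 : (m - a) / (m - cs) * F a + (a - cs) / (m - cs) * F a = F a := by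
        rw [← add_mul, hts, one_mul]
      linarith
  · by_contra hle
    push_neg at hle
    rcases eq_or_lt_of_le hle with heq | hlt
    · have := hmin (-0.434748 : ℝ)
      rw [heq] at hFmb
      linarith
    · -- -0.434748 < -0.434747 < cs
      set b : ℝ := -0.434747 with hb
      set m : ℝ := -0.434748 with hm
      have hden : (0 : ℝ) < cs - m := by
        have : m < b := by rw [hb, hm]; norm_num
        linarith
      have ht : 0 ≤ (b - m) / (cs - m) := div_nonneg (by rw [hb, hm]; norm_num) hden.le
      have hs : 0 < (cs - b) / (cs - m) := div_pos (by linarith) hden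
      have hts : (b - m) / (cs - m) + (cs - b) / (cs - m) = 1 := by
        field_simp; ring
      have hcomb : (b - m) / (cs - m) * cs + (cs - b) / (cs - m) * m = b := by
        field_simp; ring
      have hconv := F_convex (x := cs) (y := m) ht hs.le hts
      rw [hcomb] at hconv
      have h1 := hmin b
      have e1 : (b - m) / (cs - m) * F cs ≤ (b - m) / (cs - m) * F b :=
        mul_le_mul_of_nonneg_left h1 ht
      have e2 : (cs - b) / (cs - m) * F m < (cs - b) / (cs - m) * F b :=
        (mul_lt_mul_iff_of_pos_left hs).2 hFmb
      have e3 : (b - m) / (cs - m) * F b + (cs - b) / (cs - m) * F b = F b := by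
        rw [← add_mul, hts, one_mul]
      linarith
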